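/- Let U and G be independent real random variables where U is uniformly distributed on [0,1] and G has the Gamma distribution with shape 2 and rate 1. Then e^{−U·G} is uniformly distributed on [0,1], i.e., P(e^{−U·G} ≤ c) = c for all c ∈ [0,1]. -/

import Mathlib

open MeasureTheory ProbabilityTheory

section Aux

open Real Set Filter

/-- Derivative fact for the antiderivative `y ↦ -(y - t + 1) e^{-y}`. -/
lemma aux_hasDerivAt (t x : ℝ) :
    HasDerivAt (fun y : ℝ => -(y - t + 1) * Real.exp (-y))
      ((x - t) * Real.exp (-x)) x := by
  have h1 : HasDerivAt (fun y : ℝ => -(y - t + 1)) (-1) x := by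
    have := (((hasDerivAt_id x).sub_const t).add_const 1).neg
    exact this
  have h2 : HasDerivAt (fun y : ℝ => Real.exp (-y)) (Real.exp (-x) * (-1)) x :=
    ((hasDerivAt_id x).neg).exp
  have := h1.fun_mul h2
  exact this.congr_deriv (by ring)

lemma aux_tendsto (t : ℝ) :
    Tendsto (fun y : ℝ => -(y - t + 1) * Real.exp (-y)) atTop (nhds 0) := by
  have h1 : Tendsto (fun y : ℝ => y ^ 1 * Real.exp (-y)) atTop (nhds 0) :=
    Real.tendsto_pow_mul_exp_neg_atTop_nhds_zero 1
  have h2 : Tendsto (fun y : ℝ => Real.exp (-y)) atTop (nhds 0) := by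
    simpa using Real.tendsto_exp_neg_atTop_nhds_zero
  have := (h1.neg).add ((h2.const_mul (t - 1)))
  have heq : (fun y : ℝ => -(y ^ 1 * Real.exp (-y)) + (t - 1) * Real.exp (-y))
      = fun y : ℝ => -(y - t + 1) * Real.exp (-y) := by
    funext y; ring
  rw [heq] at this
  simpa using this

lemma aux_integral (t : ℝ) :
    ∫ y in Set.Ioi t, (y - t) * Real.exp (-y) = Real.exp (-t) := by
  have h := integral_Ioi_of_hasDerivAt_of_nonneg'
    (g := fun y : ℝ => -(y - t + 1) * Real.exp (-y))
    (g' := fun y : ℝ => (y - t) * Real.exp (-y)) (a := t) (l := 0)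
    (fun x _ => aux_hasDerivAt t x)
    (fun x hx => mul_nonneg (by simp only [Set.mem_Ioi] at hx; linarith) (Real.exp_pos _).le)
    (aux_tendsto t)
  rw [h]
  ring_nf

lemma aux_integrable (t : ℝ) :
    IntegrableOn (fun y : ℝ => (y - t) * Real.exp (-y)) (Set.Ioi t) := by
  exact integrableOn_Ioi_deriv_of_nonneg'
    (fun x _ => aux_hasDerivAt t x)
    (fun x hx => mul_nonneg (by simp only [Set.mem_Ioi] at hx; linarith) (Real.exp_pos _).le)
    (aux_tendsto t)

lemma aux_gammaPDF (y : ℝ) (hy : 0 ≤ y) :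
    gammaPDF 2 1 y = ENNReal.ofReal (y * Real.exp (-y)) := by
  rw [gammaPDF_of_nonneg hy]
  congr 1
  rw [Real.Gamma_two]
  have : y ^ ((2 : ℝ) - 1) = y := by
    norm_num
  rw [this]
  simp

end Aux

/-- **`e^{−U·G}` is uniform on `[0,1]` (Appendix E of the paper).**
If `U` is uniform on `[0,1]`, `G` is Gamma(2,1), and `U` and `G` are independent, then
`P(e^{−U·G} ≤ c) = c` for all `c ∈ [0,1]`. -/
theorem exp_neg_uniform_mul_gamma_uniform
    {Ω : Type*} [MeasurableSpace Ω] (μ : Measure Ω) [IsProbabilityMeasure μ]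
    (U G : Ω → ℝ) (hU : Measurable U) (hG : Measurable G)
    (hUunif : pdf.IsUniform U (Set.Icc (0 : ℝ) 1) μ volume)
    (hGgamma : Measure.map G μ = gammaMeasure 2 1)
    (hindep : IndepFun U G μ) :
    ∀ c : ℝ, c ∈ Set.Icc (0 : ℝ) 1 →
      μ {ω | Real.exp (-(U ω * G ω)) ≤ c} = ENNReal.ofReal c := by
  intro c hc
  obtain ⟨hc0, hc1⟩ := hc
  rcases eq_or_lt_of_le hc0 with rfl | hcpos
  · have hempty : {ω | Real.exp (-(U ω * G ω)) ≤ (0 : ℝ)} = ∅ := by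
      ext ω
      simp [not_le.mpr (Real.exp_pos _)]
    simp [hempty]
  -- Now 0 < c ≤ 1.
  set t : ℝ := -Real.log c with ht
  have ht0 : 0 ≤ t := by
    have := Real.log_nonpos hc0 hc1
    simp only [ht]
    linarith
  have hexpt : Real.exp (-t) = c := by rw [ht, neg_neg, Real.exp_log hcpos]
  -- the target set as a preimage
  set S : Set (ℝ × ℝ) := {p : ℝ × ℝ | Real.exp (-(p.1 * p.2)) ≤ c} with hS
  have hmeasf : Measurable fun p : ℝ × ℝ => Real.exp (-(p.1 * p.2)) :=
    ((measurable_fst.mul measurable_snd).neg).exp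
  have hSmeas : MeasurableSet S := hmeasf measurableSet_Iic
  have hmap : Measure.map (fun ω => (U ω, G ω)) μ
      = (Measure.map U μ).prod (Measure.map G μ) :=
    (ProbabilityTheory.indepFun_iff_map_prod_eq_prod_map_map hU.aemeasurable
      hG.aemeasurable).mp hindep
  haveI : IsProbabilityMeasure (Measure.map U μ) := Measure.isProbabilityMeasure_map hU.aemeasurable
  haveI : IsProbabilityMeasure (Measure.map G μ) := Measure.isProbabilityMeasure_map hG.aemeasurable
  have h1 : μ {ω | Real.exp (-(U ω * G ω)) ≤ c}
      = (Measure.map U μ).prod (Measure.map G μ) S := by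
    rw [← hmap, Measure.map_apply (hU.prodMk hG) hSmeas]
    rfl
  rw [h1, Measure.prod_apply_symm hSmeas]
  -- the slice measure
  have hIccMeas : MeasurableSet (Set.Icc (0 : ℝ) 1) := measurableSet_Icc
  have hvolIcc : volume (Set.Icc (0 : ℝ) 1) = 1 := by
    rw [Real.volume_Icc]; norm_num
  have hmapU : Measure.map U μ = ProbabilityTheory.cond volume (Set.Icc (0 : ℝ) 1) := hUunif
  -- value of the slice for y > 0
  have hslice : ∀ y : ℝ, 0 < y →
      (Measure.map U μ) ((fun x => (x, y)) ⁻¹' S) = ENNReal.ofReal (1 - t / y) := by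
    intro y hy
    have hsetEq : ((fun x => (x, y)) ⁻¹' S) = Set.Ici (t / y) := by
      ext x
      simp only [Set.mem_preimage, hS, Set.mem_setOf_eq, Set.mem_Ici]
      rw [← hexpt, Real.exp_le_exp]
      constructor
      · intro h
        rw [div_le_iff₀ hy]
        linarith
      · intro h
        rw [div_le_iff₀ hy] at h
        linarith
    have hinter : Set.Icc (0 : ℝ) 1 ∩ Set.Ici (t / y) = Set.Icc (t / y) 1 := by
      ext x
      simp only [Set.mem_inter_iff, Set.mem_Icc, Set.mem_Ici]
      constructor
      · rintro ⟨⟨_, hx1⟩, hx2⟩; exact ⟨hx2, hx1⟩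
      · rintro ⟨hx2, hx1⟩; exact ⟨⟨le_trans (div_nonneg ht0 hy.le) hx2, hx1⟩, hx2⟩
    rw [hsetEq, hmapU, ProbabilityTheory.cond_apply hIccMeas, hvolIcc, inv_one, one_mul,
      hinter, Real.volume_Icc]
  -- rewrite the lintegral over the gamma measure as a lintegral over volume
  rw [hGgamma]
  unfold gammaMeasure
  have hmg : Measurable (gammaPDF 2 1) := (measurable_gammaPDFReal 2 1).ennreal_ofReal
  rw [lintegral_withDensity_eq_lintegral_mul volume hmg
    (measurable_measure_prodMk_right hSmeas)]
  have hptwise : ∀ y : ℝ,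
      (gammaPDF 2 1 * fun y => (Measure.map U μ) ((fun x => (x, y)) ⁻¹' S)) y
      = (Set.Ioi t).indicator (fun y => ENNReal.ofReal ((y - t) * Real.exp (-y))) y := by
    intro y
    simp only [Pi.mul_apply]
    rcases le_or_gt y 0 with hy | hy
    · -- gammaPDF vanishes (or the point is y = 0 ≤ t, outside Ioi t anyway)
      rcases lt_or_eq_of_le hy with hy' | hy'
      · rw [gammaPDF_of_neg hy', zero_mul, Set.indicator_of_notMem (by
          simp only [Set.mem_Ioi, not_lt]; linarith)]
      · subst hy'
        rw [aux_gammaPDF 0 le_rfl]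
        simp only [zero_mul, ENNReal.ofReal_zero]
        rw [Set.indicator_of_notMem (by simp only [Set.mem_Ioi, not_lt]; exact ht0)]
    · rw [hslice y hy, aux_gammaPDF y hy.le]
      rcases le_or_gt y t with hyt | hyt
      · have h0 : (1 : ℝ) - t / y ≤ 0 := by
          have : 1 ≤ t / y := (one_le_div hy).mpr hyt
          linarith
        rw [ENNReal.ofReal_eq_zero.mpr h0, mul_zero,
          Set.indicator_of_notMem (by simp only [Set.mem_Ioi, not_lt]; exact hyt)]
      · rw [Set.indicator_of_mem (Set.mem_Ioi.mpr hyt),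
          ← ENNReal.ofReal_mul (mul_nonneg hy.le (Real.exp_pos _).le)]
        congr 1
        field_simp
  rw [lintegral_congr hptwise, lintegral_indicator measurableSet_Ioi]
  have hnn : 0 ≤ᵐ[volume.restrict (Set.Ioi t)] fun y : ℝ => (y - t) * Real.exp (-y) := by
    refine (ae_restrict_iff' measurableSet_Ioi).mpr (ae_of_all _ fun y hy => ?_)
    exact mul_nonneg (by simp only [Set.mem_Ioi] at hy; linarith) (Real.exp_pos _).le
  rw [← ofReal_integral_eq_lintegral_ofReal (aux_integrable t) hnn, aux_integral t, hexpt]
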